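/- arXiv:2204.06622 — 5 statements merged into one kernel-verified Lean document; each statement's English description precedes it below -/
import Mathlib

section
/- For every ε > 0 the continuous linear operator ε·id_F + 𝒢*∘𝒢 on F is invertible (a unit in the ring of continuous linear endomorphisms of F), and the unique minimizer of the Tikhonov functional Φ is given explicitly by f̄ = (ε·id_F + 𝒢*∘𝒢)⁻¹ (𝒢* d). -/
open RealInnerProductSpace ContinuousLinearMap

/-- For every `ε > 0` the operator `ε·id + 𝒢*∘𝒢` is a unit in the ring of continuous
linear endomorphisms of `F`, and the unique minimizer of the Tikhonov functional is
`f̄ = (ε·id + 𝒢*∘𝒢)⁻¹ (𝒢* d)`. -/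
theorem tikhonov_minimizer_explicit_formula
    {F : Type*} [NormedAddCommGroup F] [InnerProductSpace ℝ F] [CompleteSpace F]
    (K : ℕ) (hK : 0 < K)
    (𝒢 : F →L[ℝ] EuclideanSpace ℝ (Fin K)) (d : EuclideanSpace ℝ (Fin K))
    (ε : ℝ) (hε : 0 < ε)
    (Φ : F → ℝ)
    (hΦ : ∀ f : F, Φ f = (1 / 2) * ‖𝒢 f - d‖ ^ 2 + (ε / 2) * ‖f‖ ^ 2)
    (T : F →L[ℝ] F)
    (hT : T = ε • ContinuousLinearMap.id ℝ F + (ContinuousLinearMap.adjoint 𝒢).comp 𝒢) :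
    ∃ hTunit : IsUnit T,
      ∀ fbar : F,
        (∀ f : F, Φ fbar ≤ Φ f) ↔
          fbar = (↑hTunit.unit⁻¹ : F →L[ℝ] F) ((ContinuousLinearMap.adjoint 𝒢) d) := by
  -- The bilinear form associated to T
  set B : F →L[ℝ] F →L[ℝ] ℝ := (innerSL ℝ).comp T with hB
  have hBapp : ∀ v w : F, B v w = ⟪T v, w⟫ := fun v w => rfl
  have hTapp : ∀ v : F, T v = ε • v + (ContinuousLinearMap.adjoint 𝒢) (𝒢 v) := by
    intro v; rw [hT]; rfl
  have coercive : IsCoercive B := by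
    refine ⟨ε, hε, fun v => ?_⟩
    rw [hBapp, hTapp, inner_add_left, real_inner_smul_left,
      ContinuousLinearMap.adjoint_inner_left, real_inner_self_eq_norm_mul_norm]
    have h1 : ⟪𝒢 v, 𝒢 v⟫ = ‖𝒢 v‖ * ‖𝒢 v‖ := real_inner_self_eq_norm_mul_norm _
    nlinarith [norm_nonneg (𝒢 v)]
  set e := coercive.continuousLinearEquivOfBilin with he
  have heT : ∀ v : F, e v = T v := by
    intro v
    apply ext_inner_right ℝ
    intro w
    rw [coercive.continuousLinearEquivOfBilin_apply, hBapp]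
  have hTunit : IsUnit T := by
    refine ⟨⟨T, (e.symm : F →L[ℝ] F), ?_, ?_⟩, rfl⟩
    · ext x
      simp only [ContinuousLinearMap.mul_apply, ContinuousLinearMap.one_apply,
        ContinuousLinearEquiv.coe_coe, ← heT, ContinuousLinearEquiv.apply_symm_apply]
    · ext x
      simp only [ContinuousLinearMap.mul_apply, ContinuousLinearMap.one_apply,
        ContinuousLinearEquiv.coe_coe, ← heT, ContinuousLinearEquiv.symm_apply_apply]
  refine ⟨hTunit, ?_⟩
  set g : F := (↑hTunit.unit⁻¹ : F →L[ℝ] F) ((ContinuousLinearMap.adjoint 𝒢) d) with hg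
  have hTg : T g = (ContinuousLinearMap.adjoint 𝒢) d := by
    have h := hTunit.unit.mul_inv
    rw [hTunit.unit_spec] at h
    exact congrFun (congrArg DFunLike.coe h) ((ContinuousLinearMap.adjoint 𝒢) d)
  clear_value g
  clear hB hBapp he heT
  -- key identity
  have key : ∀ h : F, Φ (g + h) = Φ g + (1 / 2) * ‖𝒢 h‖ ^ 2 + (ε / 2) * ‖h‖ ^ 2 := by
    intro h
    have cross : ⟪𝒢 g - d, 𝒢 h⟫ = -(ε * ⟪g, h⟫) := by
      rw [← ContinuousLinearMap.adjoint_inner_left]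
      have hadj : (ContinuousLinearMap.adjoint 𝒢) (𝒢 g - d) = (-ε) • g := by
        have := hTapp g
        rw [hTg] at this
        rw [map_sub]
        have h2 : (ContinuousLinearMap.adjoint 𝒢) (𝒢 g)
            = (ContinuousLinearMap.adjoint 𝒢) d - ε • g := by
          rw [this]; abel
        rw [h2]; module
      rw [hadj, real_inner_smul_left]; ring
    have e1 : 𝒢 (g + h) - d = (𝒢 g - d) + 𝒢 h := by rw [map_add]; abel
    rw [hΦ, hΦ, e1, norm_add_sq_real (𝒢 g - d) (𝒢 h), norm_add_sq_real g h, cross]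
    ring
  intro fbar
  constructor
  · intro hmin
    have h1 := key (fbar - g)
    have hgf : g + (fbar - g) = fbar := by abel
    rw [hgf] at h1
    have ha : (0:ℝ) ≤ 1 / 2 * ‖𝒢 (fbar - g)‖ ^ 2 := by positivity
    have hc : Φ fbar ≤ Φ g := hmin g
    have hd : ε / 2 * ‖fbar - g‖ ^ 2 ≤ 0 := by linarith
    have h3 : ‖fbar - g‖ ^ 2 ≤ 0 := by
      by_contra hpos
      push_neg at hpos
      have := mul_pos (half_pos hε) hpos
      linarith
    have h4 : fbar - g = 0 := by
      have h5 : ‖fbar - g‖ ^ 2 = 0 := le_antisymm h3 (sq_nonneg _)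
      have h6 : ‖fbar - g‖ = 0 := by
        exact pow_eq_zero_iff two_ne_zero |>.mp h5
      exact norm_eq_zero.mp h6
    exact sub_eq_zero.mp h4
  · intro hfb
    intro f
    have h1 := key (f - g)
    have hgf : g + (f - g) = f := by abel
    rw [hgf] at h1
    rw [hfb]
    have ha : (0:ℝ) ≤ 1 / 2 * ‖𝒢 (f - g)‖ ^ 2 := by positivity
    have hb : (0:ℝ) ≤ ε / 2 * ‖f - g‖ ^ 2 := by positivity
    linarith
end

section
/- A feasible pair (f, u) minimizes Ψ over all feasible pairs if and only if there exists a Lagrange multiplier λ ∈ U such that the following variational system holds: (i) ε⟨f, φ⟩_F = b(φ, λ) for all φ ∈ F; (ii) e(u, μ) = b(f, μ) for all μ ∈ U; (iii) e(λ, v) = ⟨d − Q u, Q v⟩ for all v ∈ U. (Abstract form of the paper's Proposition 2: equivalence of the constrained optimization problem and the Euler–Lagrange variational system.) -/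
open scoped RealInnerProductSpace

/-- If `A*t^2 + B*t ≥ 0` for all real `t` with `A ≥ 0`, then `B = 0`. -/
lemma aux_quad_coeff_zero (A B : ℝ) (hA : 0 ≤ A) (h : ∀ t : ℝ, 0 ≤ A * t ^ 2 + B * t) :
    B = 0 := by
  have h1 := h (-B / (A + 1))
  have hA1 : 0 < A + 1 := by linarith
  have : A * (-B / (A + 1)) ^ 2 + B * (-B / (A + 1)) = -(B ^ 2) * (1 / (A + 1) ^ 2) := by
    field_simp
    ring
  rw [this] at h1
  have hpos : 0 < 1 / (A + 1) ^ 2 := by positivity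
  have hBp : B ^ 2 * (1 / (A + 1) ^ 2) = 0 :=
    le_antisymm (by linarith) (mul_nonneg (sq_nonneg B) hpos.le)
  rcases mul_eq_zero.1 hBp with h' | h'
  · exact (pow_eq_zero_iff two_ne_zero).1 h'
  · exact absurd h' hpos.ne'

/-- Convexity inequality for squared norms in a real inner product space. -/
lemma aux_sq_ge {V : Type*} [NormedAddCommGroup V] [InnerProductSpace ℝ V] (x y : V) :
    ‖x‖ ^ 2 + 2 * ⟪x, y - x⟫ ≤ ‖y‖ ^ 2 := by
  have h : ‖y‖ ^ 2 = ‖x + (y - x)‖ ^ 2 := by rw [add_sub_cancel]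
  rw [h, norm_add_sq_real]
  nlinarith [sq_nonneg ‖y - x‖]

set_option maxHeartbeats 1000000 in
/-- Abstract form of the paper's Proposition 2: a feasible pair `(f, u)` minimizes `Ψ`
over all feasible pairs iff there exists a Lagrange multiplier `λ` such that the
Euler–Lagrange variational system (i)–(iii) holds. -/
theorem feasible_pair_minimizes_iff_lagrange_multiplier
    {F U : Type*}
    [NormedAddCommGroup F] [InnerProductSpace ℝ F] [CompleteSpace F]
    [NormedAddCommGroup U] [InnerProductSpace ℝ U] [CompleteSpace U]
    (K : ℕ) (hK : 0 < K)
    (e : U →ₗ[ℝ] U →ₗ[ℝ] ℝ)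
    (hebd : ∃ Ce : ℝ, ∀ u v : U, |e u v| ≤ Ce * ‖u‖ * ‖v‖)
    (hesymm : ∀ u v : U, e u v = e v u)
    (c : ℝ) (hc : 0 < c) (hecoer : ∀ v : U, c * ‖v‖ ^ 2 ≤ e v v)
    (b : F →ₗ[ℝ] U →ₗ[ℝ] ℝ)
    (hbbd : ∃ Cb : ℝ, ∀ (f : F) (v : U), |b f v| ≤ Cb * ‖f‖ * ‖v‖)
    (Q : U →L[ℝ] EuclideanSpace ℝ (Fin K)) (d : EuclideanSpace ℝ (Fin K))
    (ε : ℝ) (hε : 0 < ε)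
    (Ψ : F → U → ℝ)
    (hΨ : ∀ (f : F) (u : U), Ψ f u = (1 / 2) * ‖Q u - d‖ ^ 2 + (ε / 2) * ‖f‖ ^ 2)
    (f : F) (u : U)
    (hfeas : ∀ μ : U, e u μ = b f μ) :
    (∀ (f' : F) (u' : U), (∀ μ : U, e u' μ = b f' μ) → Ψ f u ≤ Ψ f' u') ↔
      ∃ lam : U,
        (∀ φ : F, ε * ⟪f, φ⟫ = b φ lam) ∧
        (∀ μ : U, e u μ = b f μ) ∧
        (∀ v : U, e lam v = ⟪d - Q u, Q v⟫) := by
  obtain ⟨Ce, hCe⟩ := hebd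
  -- Build the continuous bilinear form `E` from `e`.
  set Ce' := max Ce 0 with hCe'
  have hbound : ∀ x y : U, ‖e x y‖ ≤ Ce' * ‖x‖ * ‖y‖ := by
    intro x y
    rw [Real.norm_eq_abs]
    calc |e x y| ≤ Ce * ‖x‖ * ‖y‖ := hCe x y
      _ ≤ Ce' * ‖x‖ * ‖y‖ := by
          have h1 : Ce ≤ Ce' := le_max_left _ _
          have h2 : (0:ℝ) ≤ ‖x‖ * ‖y‖ := by positivity
          nlinarith
  set E : U →L[ℝ] U →L[ℝ] ℝ := LinearMap.mkContinuous₂ e Ce' hbound with hE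
  have hEapp : ∀ x y : U, E x y = e x y := fun x y => rfl
  have hEcoer : IsCoercive E := by
    refine ⟨c, hc, fun v => ?_⟩
    have := hecoer v
    rw [hEapp]
    nlinarith [sq_nonneg ‖v‖]
  -- Lax–Milgram: solve `e x · = ℓ` for any continuous functional `ℓ`.
  have solve : ∀ ℓ : U →L[ℝ] ℝ, ∃ x : U, ∀ v : U, e x v = ℓ v := by
    intro ℓ
    set y := (InnerProductSpace.toDual ℝ U).symm ℓ with hy
    refine ⟨hEcoer.continuousLinearEquivOfBilin.symm y, fun v => ?_⟩
    have h1 : ⟪hEcoer.continuousLinearEquivOfBilin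
        (hEcoer.continuousLinearEquivOfBilin.symm y), v⟫ =
        E (hEcoer.continuousLinearEquivOfBilin.symm y) v :=
      hEcoer.continuousLinearEquivOfBilin_apply _ _
    rw [ContinuousLinearEquiv.apply_symm_apply] at h1
    rw [← hEapp, ← h1, hy, InnerProductSpace.toDual_symm_apply]
  constructor
  · -- minimizer ⇒ multiplier
    intro hmin
    obtain ⟨Cb, hCb⟩ := hbbd
    -- λ solves e(λ, v) = ⟪d - Qu, Qv⟫
    obtain ⟨lam, hlam⟩ := solve ((innerSL ℝ (d - Q u)).comp Q)
    have hlam' : ∀ v : U, e lam v = ⟪d - Q u, Q v⟫ := fun v => hlam v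
    refine ⟨lam, fun φ => ?_, hfeas, hlam'⟩
    -- for each φ, solve e(w, μ) = b φ μ
    have hbφ : ∀ y : U, ‖b φ y‖ ≤ (max Cb 0 * ‖φ‖) * ‖y‖ := by
      intro y
      rw [Real.norm_eq_abs]
      calc |b φ y| ≤ Cb * ‖φ‖ * ‖y‖ := hCb φ y
        _ ≤ max Cb 0 * ‖φ‖ * ‖y‖ := by
            have h1 : Cb ≤ max Cb 0 := le_max_left _ _
            have h2 : (0:ℝ) ≤ ‖φ‖ * ‖y‖ := by positivity
            nlinarith
    obtain ⟨w, hw⟩ := solve ((b φ).mkContinuous (max Cb 0 * ‖φ‖) hbφ)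
    have hw' : ∀ μ : U, e w μ = b φ μ := fun μ => hw μ
    -- perturbation: (f + t•φ, u + t•w) is feasible
    have hfeas' : ∀ t : ℝ, ∀ μ : U, e (u + t • w) μ = b (f + t • φ) μ := by
      intro t μ
      simp only [map_add, map_smul, LinearMap.add_apply, LinearMap.smul_apply,
        smul_eq_mul, hfeas μ, hw' μ]
    set Aco : ℝ := (1 / 2) * ‖Q w‖ ^ 2 + (ε / 2) * ‖φ‖ ^ 2 with hAco
    set Bco : ℝ := ⟪Q u - d, Q w⟫ + ε * ⟪f, φ⟫ with hBco
    have hquad : ∀ t : ℝ, 0 ≤ Aco * t ^ 2 + Bco * t := by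
      intro t
      have h := hmin (f + t • φ) (u + t • w) (hfeas' t)
      rw [hΨ, hΨ] at h
      have h1 : Q (u + t • w) - d = (Q u - d) + t • Q w := by
        rw [map_add, map_smul]; abel
      have h2 : ‖Q (u + t • w) - d‖ ^ 2
          = ‖Q u - d‖ ^ 2 + 2 * (t * ⟪Q u - d, Q w⟫) + t ^ 2 * ‖Q w‖ ^ 2 := by
        rw [h1, norm_add_sq_real, real_inner_smul_right, norm_smul, mul_pow,
          Real.norm_eq_abs, sq_abs]
      have h3 : ‖f + t • φ‖ ^ 2
          = ‖f‖ ^ 2 + 2 * (t * ⟪f, φ⟫) + t ^ 2 * ‖φ‖ ^ 2 := by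
        rw [norm_add_sq_real, real_inner_smul_right, norm_smul, mul_pow,
          Real.norm_eq_abs, sq_abs]
      rw [h2, h3] at h
      rw [hAco, hBco]
      nlinarith
    have hAco_nonneg : 0 ≤ Aco := by positivity
    have hB0 : Bco = 0 := aux_quad_coeff_zero Aco Bco hAco_nonneg hquad
    -- conclude (i)
    have key : ε * ⟪f, φ⟫ = ⟪d - Q u, Q w⟫ := by
      have : ⟪d - Q u, Q w⟫ = -⟪Q u - d, Q w⟫ := by
        rw [← inner_neg_left]; congr 1; abel
      rw [this]
      rw [hBco] at hB0
      linarith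
    rw [key, ← hlam' w, hesymm lam w, hw' lam]
  · -- multiplier ⇒ minimizer
    rintro ⟨lam, hi, _, hiii⟩ f' u' hfeas'
    rw [hΨ, hΨ]
    have hconv1 : ‖Q u - d‖ ^ 2 + 2 * ⟪Q u - d, (Q u' - d) - (Q u - d)⟫ ≤ ‖Q u' - d‖ ^ 2 :=
      aux_sq_ge _ _
    have hconv2 : ‖f‖ ^ 2 + 2 * ⟪f, f' - f⟫ ≤ ‖f'‖ ^ 2 := aux_sq_ge _ _
    have h1 : ⟪Q u - d, (Q u' - d) - (Q u - d)⟫ = ⟪Q u - d, Q (u' - u)⟫ := by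
      congr 1
      rw [map_sub]; abel
    have h2 : ⟪Q u - d, Q (u' - u)⟫ = -(e lam (u' - u)) := by
      rw [hiii (u' - u), ← inner_neg_left]
      congr 1; abel
    have h3 : e lam (u' - u) = b f' lam - b f lam := by
      rw [map_sub, hesymm lam u', hesymm lam u, hfeas' lam, hfeas lam]
    have h4 : ⟪f, f' - f⟫ = ⟪f, f'⟫ - ⟪f, f⟫ := by rw [inner_sub_right]
    have h5 : ε * ⟪f, f'⟫ = b f' lam := hi f'
    have h6 : ε * ⟪f, f⟫ = b f lam := hi f
    have key : ⟪Q u - d, (Q u' - d) - (Q u - d)⟫ + ε * ⟪f, f' - f⟫ = 0 := by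
      rw [h1, h2, h3, h4]
      have : ε * (⟪f, f'⟫ - ⟪f, f⟫) = b f' lam - b f lam := by
        rw [mul_sub, h5, h6]
      rw [this]; ring
    nlinarith
end

section
/- The Euler–Lagrange variational system has exactly one solution: there exists a unique triple (f, λ, u) ∈ F × U × U satisfying (i) ε⟨f, φ⟩_F = b(φ, λ) for all φ ∈ F; (ii) e(u, μ) = b(f, μ) for all μ ∈ U; (iii) e(λ, v) = ⟨d − Q u, Q v⟩ for all v ∈ U. (This justifies the paper's claim that EEG source estimation is performed by a single linear solve.) -/
open scoped RealInnerProductSpace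

set_option maxHeartbeats 1000000 in
/-- The Euler–Lagrange variational system has exactly one solution `(f, λ, u)`,
so EEG source estimation is performed by a single linear solve. -/
theorem euler_lagrange_system_exists_unique_solution
    {F U : Type*}
    [NormedAddCommGroup F] [InnerProductSpace ℝ F] [CompleteSpace F]
    [NormedAddCommGroup U] [InnerProductSpace ℝ U] [CompleteSpace U]
    (K : ℕ) (hK : 0 < K)
    (e : U →ₗ[ℝ] U →ₗ[ℝ] ℝ)
    (hebd : ∃ Ce : ℝ, ∀ u v : U, |e u v| ≤ Ce * ‖u‖ * ‖v‖)
    (hesymm : ∀ u v : U, e u v = e v u)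
    (c : ℝ) (hc : 0 < c) (hecoer : ∀ v : U, c * ‖v‖ ^ 2 ≤ e v v)
    (b : F →ₗ[ℝ] U →ₗ[ℝ] ℝ)
    (hbbd : ∃ Cb : ℝ, ∀ (f : F) (v : U), |b f v| ≤ Cb * ‖f‖ * ‖v‖)
    (Q : U →L[ℝ] EuclideanSpace ℝ (Fin K)) (d : EuclideanSpace ℝ (Fin K))
    (ε : ℝ) (hε : 0 < ε) :
    ∃! t : F × U × U,
      (∀ φ : F, ε * ⟪t.1, φ⟫ = b φ t.2.1) ∧
      (∀ μ : U, e t.2.2 μ = b t.1 μ) ∧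
      (∀ v : U, e t.2.1 v = ⟪d - Q t.2.2, Q v⟫) := by
  classical
  obtain ⟨Ce, hCe⟩ := hebd
  obtain ⟨Cb, hCb⟩ := hbbd
  -- continuous bilinear versions
  let e' : U →L[ℝ] U →L[ℝ] ℝ :=
    LinearMap.mkContinuous₂ e Ce (fun u v => by simpa using hCe u v)
  let b' : F →L[ℝ] U →L[ℝ] ℝ :=
    LinearMap.mkContinuous₂ b Cb (fun f v => by simpa using hCb f v)
  have hcoer : IsCoercive e' := ⟨c, hc, fun u => by
    have := hecoer u
    simpa [e', LinearMap.mkContinuous₂_apply, mul_assoc, sq] using this⟩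
  let eE : U ≃L[ℝ] U := hcoer.continuousLinearEquivOfBilin
  have heE : ∀ u w : U, ⟪eE u, w⟫ = e u w := fun u w =>
    hcoer.continuousLinearEquivOfBilin_apply u w
  -- Riesz representation of b
  let Bop : F →L[ℝ] U := LinearMap.mkContinuous
    { toFun := fun φ => (InnerProductSpace.toDual ℝ U).symm (b' φ)
      map_add' := fun x y => by simp
      map_smul' := fun r x => by simp }
    ‖b'‖ (fun φ => by
      simpa using b'.le_opNorm φ)
  have hB : ∀ (φ : F) (μ : U), ⟪Bop φ, μ⟫ = b φ μ := fun φ μ => by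
    simp [Bop, InnerProductSpace.toDual_symm_apply]
    rfl
  let Es : U →L[ℝ] U := (eE.symm : U →L[ℝ] U)
  have hEs : ∀ x y : U, ⟪Es x, y⟫ = ⟪x, Es y⟫ := by
    intro x y
    have h1 : ⟪Es x, y⟫ = ⟪eE (Es y), Es x⟫ := by
      rw [real_inner_comm]
      simp [Es]
    rw [h1, heE, hesymm, ← heE]
    simp [Es]
  let T : F →L[ℝ] EuclideanSpace ℝ (Fin K) := Q ∘L Es ∘L Bop
  have hT : ∀ f : F, T f = Q (Es (Bop f)) := fun f => rfl
  have hTadj : ∀ x, ContinuousLinearMap.adjoint T x =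
      ContinuousLinearMap.adjoint Bop (Es (ContinuousLinearMap.adjoint Q x)) := by
    intro x
    apply ext_inner_right ℝ
    intro g
    rw [ContinuousLinearMap.adjoint_inner_left, ContinuousLinearMap.adjoint_inner_left,
      hT, ← ContinuousLinearMap.adjoint_inner_left Q, hEs]
  let S : F →L[ℝ] F := ε • ContinuousLinearMap.id ℝ F +
    (ContinuousLinearMap.adjoint T) ∘L T
  have hS : ∀ f : F, S f = ε • f + ContinuousLinearMap.adjoint T (T f) := fun f => rfl
  have hSinner : ∀ f g : F, ⟪S f, g⟫ = ε * ⟪f, g⟫ + ⟪T f, T g⟫ := by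
    intro f g
    rw [hS, inner_add_left, real_inner_smul_left, ContinuousLinearMap.adjoint_inner_left]
  -- the bilinear form of S, and its coercivity
  let aB : F →L[ℝ] F →L[ℝ] ℝ := LinearMap.mkContinuous₂
    { toFun := fun f =>
        { toFun := fun g => ⟪S f, g⟫
          map_add' := fun x y => inner_add_right _ _ _
          map_smul' := fun r x => by simp [real_inner_smul_right] }
      map_add' := fun x y => by ext g; simp [inner_add_left]
      map_smul' := fun r x => by ext g; simp [real_inner_smul_left] }
    ‖S‖ (fun f g => by
      simp only [LinearMap.coe_mk, AddHom.coe_mk]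
      calc ‖⟪S f, g⟫‖ ≤ ‖S f‖ * ‖g‖ := norm_inner_le_norm _ _
        _ ≤ ‖S‖ * ‖f‖ * ‖g‖ := by
            gcongr; exact S.le_opNorm f)
  have haB : ∀ f g : F, aB f g = ⟪S f, g⟫ := fun f g => rfl
  have hacoer : IsCoercive aB := by
    refine ⟨ε, hε, fun f => ?_⟩
    rw [haB, hSinner, real_inner_self_eq_norm_mul_norm]
    nlinarith [real_inner_self_nonneg (x := T f)]
  let G : F ≃L[ℝ] F := hacoer.continuousLinearEquivOfBilin
  have hG : ∀ f : F, G f = S f := by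
    intro f
    apply ext_inner_right ℝ
    intro w
    rw [hacoer.continuousLinearEquivOfBilin_apply, haB]
  -- the solution
  set f₀ : F := G.symm (ContinuousLinearMap.adjoint T d) with hf₀
  set u₀ : U := Es (Bop f₀) with hu₀
  set l₀ : U := Es (ContinuousLinearMap.adjoint Q (d - Q u₀)) with hl₀
  have hSf₀ : S f₀ = ContinuousLinearMap.adjoint T d := by
    rw [← hG]; simp [hf₀]
  have hTf₀ : T f₀ = Q u₀ := by rw [hT, hu₀]
  have hεf₀ : ε • f₀ = ContinuousLinearMap.adjoint Bop l₀ := by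
    have h1 : ContinuousLinearMap.adjoint Bop l₀ =
        ContinuousLinearMap.adjoint T (d - Q u₀) := by
      rw [hTadj, hl₀]
    rw [h1, map_sub, ← hSf₀, ← hTf₀, hS]
    abel
  -- key characterization lemma
  have hchar : ∀ t : F × U × U,
      ((∀ φ : F, ε * ⟪t.1, φ⟫ = b φ t.2.1) ∧
       (∀ μ : U, e t.2.2 μ = b t.1 μ) ∧
       (∀ v : U, e t.2.1 v = ⟪d - Q t.2.2, Q v⟫)) ↔
      (ε • t.1 = ContinuousLinearMap.adjoint Bop t.2.1 ∧
       eE t.2.2 = Bop t.1 ∧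
       eE t.2.1 = ContinuousLinearMap.adjoint Q (d - Q t.2.2)) := by
    rintro ⟨f, l, u⟩
    simp only
    constructor
    · rintro ⟨h1, h2, h3⟩
      refine ⟨?_, ?_, ?_⟩
      · apply ext_inner_right ℝ
        intro φ
        rw [real_inner_smul_left, h1, ← hB, ContinuousLinearMap.adjoint_inner_left,
          real_inner_comm]
      · apply ext_inner_right ℝ
        intro μ
        rw [heE, h2, hB]
      · apply ext_inner_right ℝ
        intro v
        rw [heE, h3, ContinuousLinearMap.adjoint_inner_left]
    · rintro ⟨h1, h2, h3⟩
      refine ⟨?_, ?_, ?_⟩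
      · intro φ
        rw [← hB, ← real_inner_smul_left, h1, ContinuousLinearMap.adjoint_inner_left]
        exact real_inner_comm _ _
      · intro μ
        rw [← heE, h2, hB]
      · intro v
        rw [← heE, h3, ContinuousLinearMap.adjoint_inner_left]
  refine ⟨(f₀, l₀, u₀), ?_, ?_⟩
  · refine (hchar (f₀, l₀, u₀)).mpr ⟨hεf₀, ?_, ?_⟩
    · rw [hu₀]; exact eE.apply_symm_apply _
    · rw [hl₀]; exact eE.apply_symm_apply _
  · rintro ⟨f, l, u⟩ ht
    obtain ⟨h1, h2, h3⟩ := (hchar (f, l, u)).mp ht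
    have hu : u = Es (Bop f) := by
      rw [← h2]; exact (eE.symm_apply_apply u).symm
    have hl : l = Es (ContinuousLinearMap.adjoint Q (d - Q u)) := by
      rw [← h3]; exact (eE.symm_apply_apply l).symm
    have hSf : S f = ContinuousLinearMap.adjoint T d := by
      have hTf : T f = Q u := by rw [hT, hu]
      have hBl : ContinuousLinearMap.adjoint Bop l =
          ContinuousLinearMap.adjoint T (d - Q u) := by
        rw [hTadj, hl]
      rw [hS, h1, hBl, map_sub, hTf]
      abel
    have hf : f = f₀ := by
      have hGf : G f = ContinuousLinearMap.adjoint T d := by rw [hG, hSf]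
      rw [hf₀, ← hGf]
      exact (G.symm_apply_apply f).symm
    have hu' : u = u₀ := by rw [hu, hf, hu₀]
    have hl' : l = l₀ := by rw [hl, hu', hl₀]
    simp only [Prod.mk.injEq]
    exact ⟨hf, hl', hu'⟩
end

section
/- The Karush–Kuhn–Tucker block matrix 𝕄 = [[A, −Bᵀ, 0], [−B, 0, Eᵀ], [0, E, G]] (a square real matrix of size M + N + N, acting on vectors (f, λ, u)) is invertible: if A f = Bᵀ λ, B f = Eᵀ u, and E λ + G u = 0, then f = 0, λ = 0, and u = 0. -/
open Matrix

/-- The KKT block matrix `𝕄 = [[A, −Bᵀ, 0], [−B, 0, Eᵀ], [0, E, G]]` is invertible: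
if `A f = Bᵀ λ`, `B f = Eᵀ u`, and `E λ + G u = 0`, then `f = 0`, `λ = 0`, `u = 0`. -/
theorem kkt_block_matrix_kernel_trivial
    (M N : ℕ) (hM : 0 < M) (hN : 0 < N)
    (A : Matrix (Fin M) (Fin M) ℝ) (hA : A.PosDef)
    (B : Matrix (Fin N) (Fin M) ℝ)
    (E : Matrix (Fin N) (Fin N) ℝ) (hE : IsUnit E)
    (G : Matrix (Fin N) (Fin N) ℝ) (hG : G.PosSemidef)
    (f : Fin M → ℝ) (lam u : Fin N → ℝ)
    (h1 : A *ᵥ f = Bᵀ *ᵥ lam)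
    (h2 : B *ᵥ f = Eᵀ *ᵥ u)
    (h3 : E *ᵥ lam + G *ᵥ u = 0) :
    f = 0 ∧ lam = 0 ∧ u = 0 := by
  have hElam : E *ᵥ lam = -(G *ᵥ u) := by
    exact eq_neg_of_add_eq_zero_left h3
  -- f ⬝ᵥ (A *ᵥ f) = -(u ⬝ᵥ (G *ᵥ u))
  have key : f ⬝ᵥ (A *ᵥ f) = -(u ⬝ᵥ (G *ᵥ u)) := by
    calc f ⬝ᵥ (A *ᵥ f) = f ⬝ᵥ (Bᵀ *ᵥ lam) := by rw [h1]
      _ = (f ᵥ* Bᵀ) ⬝ᵥ lam := by rw [dotProduct_mulVec]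
      _ = (B *ᵥ f) ⬝ᵥ lam := by rw [vecMul_transpose]
      _ = (Eᵀ *ᵥ u) ⬝ᵥ lam := by rw [h2]
      _ = (u ᵥ* E) ⬝ᵥ lam := by rw [← vecMul_transpose, transpose_transpose]
      _ = u ⬝ᵥ (E *ᵥ lam) := by rw [dotProduct_mulVec]
      _ = -(u ⬝ᵥ (G *ᵥ u)) := by rw [hElam, dotProduct_neg]
  have hGu : 0 ≤ u ⬝ᵥ (G *ᵥ u) := by
    have := hG.dotProduct_mulVec_nonneg u
    simpa using this
  have hf : f = 0 := by
    by_contra hne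
    have := hA.dotProduct_mulVec_pos hne
    simp only [star_trivial] at this
    have hpos : 0 < f ⬝ᵥ (A *ᵥ f) := by simpa using this
    linarith [key, hGu]
  have hu : u = 0 := by
    have h2' : Eᵀ *ᵥ u = 0 := by rw [← h2, hf, mulVec_zero]
    have hEt : IsUnit Eᵀ := (Matrix.isUnit_transpose ..).mpr hE
    exact (Matrix.mulVec_injective_iff_isUnit.mpr hEt) (by simpa using h2')
  have hlam : lam = 0 := by
    have : E *ᵥ lam = 0 := by rw [hElam, hu, mulVec_zero, neg_zero]
    exact (Matrix.mulVec_injective_iff_isUnit.mpr hE) (by simpa using this)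
  exact ⟨hf, hlam, hu⟩
end

section
/- (Constrained-set approximation lemma, used to pass from the kernel infimum to the full-subspace infimum, cf. Braess Remark 4.10) For every x ∈ X and every y_h ∈ X_h there exists z_h ∈ X_h with b(x − z_h, μ_h) = 0 for all μ_h ∈ M_h and ‖x − z_h‖ ≤ (1 + β₂/β₁) ‖x − y_h‖. In particular the discrete constrained set K_h = { z_h ∈ X_h : b(x − z_h, μ_h) = 0 for all μ_h ∈ M_h } is nonempty and inf over z_h ∈ K_h of ‖x − z_h‖ is at most (1 + β₂/β₁) · (infimum over y_h ∈ X_h of ‖x − y_h‖). -/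
open RealInnerProductSpace

lemma constrained_key_step {X M : Type*}
    [NormedAddCommGroup X] [InnerProductSpace ℝ X]
    [NormedAddCommGroup M] [InnerProductSpace ℝ M]
    (b : X →ₗ[ℝ] M →ₗ[ℝ] ℝ)
    (X_h : Submodule ℝ X) (M_h : Submodule ℝ M)
    [FiniteDimensional ℝ X_h] [FiniteDimensional ℝ M_h]
    (β₁ β₂ : ℝ) (hβ₁ : 0 < β₁) (hβ₂ : 0 < β₂)
    (hcont : ∀ (y : X) (μ : M), |b y μ| ≤ β₂ * ‖y‖ * ‖μ‖)
    (hinfsup : ∀ μ_h ∈ M_h,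
      β₁ * ‖μ_h‖ ≤ sSup {r : ℝ | ∃ y_h ∈ X_h, y_h ≠ 0 ∧ r = b y_h μ_h / ‖y_h‖})
    (x : X) (y_h : X) (hy : y_h ∈ X_h) :
    ∃ z_h ∈ X_h, (∀ μ_h ∈ M_h, b (x - z_h) μ_h = 0) ∧
      ‖x - z_h‖ ≤ (1 + β₂ / β₁) * ‖x - y_h‖ := by
  classical
  -- the raw Riesz map
  have hT0 : ∀ μ : M_h, ∀ y : X_h,
      ⟪(InnerProductSpace.toDual ℝ X_h).symm
        (LinearMap.toContinuousLinearMap ((b.domRestrict X_h).flip (μ : M))), y⟫ = b y μ := by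
    intro μ y
    rw [InnerProductSpace.toDual_symm_apply]
    simp
  let T : M_h →ₗ[ℝ] X_h :=
  { toFun := fun μ => (InnerProductSpace.toDual ℝ X_h).symm
      (LinearMap.toContinuousLinearMap ((b.domRestrict X_h).flip (μ : M)))
    map_add' := by
      intro μ ν
      apply ext_inner_right ℝ
      intro y
      rw [inner_add_left, hT0, hT0, hT0]
      simp
    map_smul' := by
      intro c μ
      apply ext_inner_right ℝ
      intro y
      rw [real_inner_smul_left, hT0, hT0]
      simp }
  have hT : ∀ (μ : M_h) (y : X_h), ⟪T μ, y⟫ = b y μ := hT0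
  have key : ∀ μ : M_h, β₁ * ‖μ‖ ≤ ‖T μ‖ := by
    intro μ
    have h1 := hinfsup (μ : M) μ.2
    have hnorm : ‖(μ : M)‖ = ‖μ‖ := rfl
    rw [hnorm] at h1
    refine h1.trans ?_
    by_cases hne : {r : ℝ | ∃ y ∈ X_h, y ≠ 0 ∧ r = b y (μ : M) / ‖y‖}.Nonempty
    · apply csSup_le hne
      rintro r ⟨y, hyX, hy0, rfl⟩
      rw [div_le_iff₀ (norm_pos_iff.mpr hy0)]
      calc b y (μ : M) = b ((⟨y, hyX⟩ : X_h) : X) (μ : M) := rfl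
        _ = ⟪T μ, (⟨y, hyX⟩ : X_h)⟫ := (hT μ _).symm
        _ ≤ ‖T μ‖ * ‖(⟨y, hyX⟩ : X_h)‖ := real_inner_le_norm _ _
        _ = ‖T μ‖ * ‖y‖ := rfl
    · rw [Set.not_nonempty_iff_eq_empty] at hne
      rw [hne, Real.sSup_empty]
      exact norm_nonneg _
  -- S := T† ∘ T is injective hence surjective
  let S : M_h →ₗ[ℝ] M_h := (LinearMap.adjoint T) ∘ₗ T
  have hS : ∀ μ ν : M_h, ⟪S μ, ν⟫ = ⟪T μ, T ν⟫ := by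
    intro μ ν
    simp [S, LinearMap.adjoint_inner_left]
  have hSinj : Function.Injective S := by
    rw [injective_iff_map_eq_zero]
    intro μ hμ
    have h2 : ⟪T μ, T μ⟫ = 0 := by rw [← hS, hμ, inner_zero_left]
    have h3 : T μ = 0 := by rwa [inner_self_eq_zero] at h2
    have h4 := key μ
    rw [h3, norm_zero] at h4
    have h5 : ‖μ‖ ≤ 0 := le_of_mul_le_mul_left (h4.trans_eq (mul_zero β₁).symm) hβ₁
    exact norm_eq_zero.mp (le_antisymm h5 (norm_nonneg μ))
  have hSsurj : Function.Surjective S :=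
    (LinearMap.injective_iff_surjective).mp hSinj
  -- Riesz representative of μ ↦ b (x - y_h) μ on M_h
  let g : M_h := (InnerProductSpace.toDual ℝ M_h).symm
    (LinearMap.toContinuousLinearMap ((b (x - y_h)).domRestrict M_h))
  have hg : ∀ μ : M_h, ⟪g, μ⟫ = b (x - y_h) μ := by
    intro μ
    rw [InnerProductSpace.toDual_symm_apply]
    simp
  have hgn : ‖g‖ ≤ β₂ * ‖x - y_h‖ := by
    rcases eq_or_ne g 0 with h | h
    · rw [h, norm_zero]; positivity
    · have hpos : 0 < ‖g‖ := norm_pos_iff.mpr h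
      have h1 : ‖g‖ * ‖g‖ = b (x - y_h) g := by
        rw [← hg g, real_inner_self_eq_norm_mul_norm]
      have h2 : b (x - y_h) (g : M) ≤ β₂ * ‖x - y_h‖ * ‖(g : M)‖ :=
        (le_abs_self _).trans (hcont _ _)
      have h3 : ‖(g : M)‖ = ‖g‖ := rfl
      nlinarith
  obtain ⟨ν, hν⟩ := hSsurj g
  set v : X_h := T ν with hv
  have hbv : ∀ μ : M_h, b (v : X) μ = b (x - y_h) μ := by
    intro μ
    calc b (v : X) (μ : M) = ⟪T μ, v⟫ := (hT μ v).symm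
      _ = ⟪T ν, T μ⟫ := real_inner_comm _ _
      _ = ⟪S ν, μ⟫ := (hS ν μ).symm
      _ = ⟪g, μ⟫ := by rw [hν]
      _ = b (x - y_h) μ := hg μ
  have hvn : ‖v‖ ≤ β₂ / β₁ * ‖x - y_h‖ := by
    have h1 : ‖v‖ * ‖v‖ = ⟪g, ν⟫ := by
      calc ‖v‖ * ‖v‖ = ⟪v, v⟫ := (real_inner_self_eq_norm_mul_norm v).symm
        _ = ⟪T ν, T ν⟫ := by rw [hv]
        _ = ⟪S ν, ν⟫ := (hS ν ν).symm
        _ = ⟪g, ν⟫ := by rw [hν]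
    have h2 : ⟪g, ν⟫ ≤ ‖g‖ * ‖ν‖ := real_inner_le_norm _ _
    have h3 : β₁ * ‖ν‖ ≤ ‖v‖ := key ν
    rcases eq_or_ne v 0 with h | h
    · rw [h, norm_zero]; positivity
    · have hpos : 0 < ‖v‖ := norm_pos_iff.mpr h
      have h12 : ‖v‖ * ‖v‖ ≤ ‖g‖ * ‖ν‖ := h1.trans_le h2
      have h7 : β₁ * ‖v‖ ≤ ‖g‖ := by
        have h10 := mul_le_mul_of_nonneg_left h12 hβ₁.le
        have h8 : β₁ * (‖g‖ * ‖ν‖) ≤ ‖g‖ * ‖v‖ := by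
          rw [mul_left_comm]
          exact mul_le_mul_of_nonneg_left h3 (norm_nonneg g)
        have h9 : (β₁ * ‖v‖) * ‖v‖ ≤ ‖g‖ * ‖v‖ := by
          rw [mul_assoc]; exact h10.trans h8
        exact le_of_mul_le_mul_right h9 hpos
      rw [div_mul_eq_mul_div, le_div_iff₀ hβ₁]
      calc ‖v‖ * β₁ = β₁ * ‖v‖ := mul_comm _ _
        _ ≤ ‖g‖ := h7
        _ ≤ β₂ * ‖x - y_h‖ := hgn
  refine ⟨y_h + (v : X), X_h.add_mem hy v.2, ?_, ?_⟩
  · intro μ_h hμ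
    have : x - (y_h + (v : X)) = (x - y_h) - (v : X) := by abel
    rw [this, map_sub, LinearMap.sub_apply, hbv ⟨μ_h, hμ⟩, sub_self]
  · have : x - (y_h + (v : X)) = (x - y_h) - (v : X) := by abel
    rw [this]
    have h4 : ‖(x - y_h) - (v : X)‖ ≤ ‖x - y_h‖ + ‖(v : X)‖ := norm_sub_le _ _
    have h5 : ‖(v : X)‖ = ‖v‖ := rfl
    rw [h5] at h4
    calc ‖(x - y_h) - (v : X)‖ ≤ ‖x - y_h‖ + ‖v‖ := h4
      _ ≤ ‖x - y_h‖ + β₂ / β₁ * ‖x - y_h‖ := by linarith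
      _ = (1 + β₂ / β₁) * ‖x - y_h‖ := by ring

/-- Constrained-set approximation lemma (cf. Braess, Remark 4.10): for every `x` and
every `y_h ∈ X_h` there exists `z_h ∈ X_h` satisfying the discrete constraint
`b(x − z_h, μ_h) = 0` for all `μ_h ∈ M_h` with `‖x − z_h‖ ≤ (1 + β₂/β₁)‖x − y_h‖`;
in particular the discrete constrained set `K_h` is nonempty and the infimum of
`‖x − z_h‖` over `K_h` is at most `(1 + β₂/β₁)` times the infimum over all of `X_h`. -/
theorem constrained_set_approximation
    {X M : Type*}
    [NormedAddCommGroup X] [InnerProductSpace ℝ X] [CompleteSpace X]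
    [NormedAddCommGroup M] [InnerProductSpace ℝ M] [CompleteSpace M]
    (b : X →ₗ[ℝ] M →ₗ[ℝ] ℝ)
    (X_h : Submodule ℝ X) (M_h : Submodule ℝ M)
    [FiniteDimensional ℝ X_h] [FiniteDimensional ℝ M_h]
    (β₁ β₂ : ℝ) (hβ₁ : 0 < β₁) (hβ₂ : 0 < β₂)
    (hcont : ∀ (y : X) (μ : M), |b y μ| ≤ β₂ * ‖y‖ * ‖μ‖)
    (hinfsup : ∀ μ_h ∈ M_h,
      β₁ * ‖μ_h‖ ≤ sSup {r : ℝ | ∃ y_h ∈ X_h, y_h ≠ 0 ∧ r = b y_h μ_h / ‖y_h‖})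
    (x : X) :
    (∀ y_h ∈ X_h, ∃ z_h ∈ X_h,
        (∀ μ_h ∈ M_h, b (x - z_h) μ_h = 0) ∧
        ‖x - z_h‖ ≤ (1 + β₂ / β₁) * ‖x - y_h‖) ∧
    {z_h : X | z_h ∈ X_h ∧ ∀ μ_h ∈ M_h, b (x - z_h) μ_h = 0}.Nonempty ∧
    sInf ((fun z_h => ‖x - z_h‖) ''
        {z_h : X | z_h ∈ X_h ∧ ∀ μ_h ∈ M_h, b (x - z_h) μ_h = 0}) ≤
      (1 + β₂ / β₁) * ⨅ y_h : X_h, ‖x - (y_h : X)‖ := by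
  have hc : (0:ℝ) < 1 + β₂ / β₁ := by positivity
  have part1 : ∀ y_h ∈ X_h, ∃ z_h ∈ X_h, (∀ μ_h ∈ M_h, b (x - z_h) μ_h = 0) ∧
      ‖x - z_h‖ ≤ (1 + β₂ / β₁) * ‖x - y_h‖ :=
    fun y_h hy => constrained_key_step b X_h M_h β₁ β₂ hβ₁ hβ₂ hcont hinfsup x y_h hy
  obtain ⟨z₀, hz₀X, hz₀c, -⟩ := part1 0 X_h.zero_mem
  have part2 : {z_h : X | z_h ∈ X_h ∧ ∀ μ_h ∈ M_h, b (x - z_h) μ_h = 0}.Nonempty :=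
    ⟨z₀, hz₀X, hz₀c⟩
  refine ⟨part1, part2, ?_⟩
  set K := {z_h : X | z_h ∈ X_h ∧ ∀ μ_h ∈ M_h, b (x - z_h) μ_h = 0} with hK
  set Sn := (fun z_h => ‖x - z_h‖) '' K with hSn
  have hbdd : BddBelow Sn := ⟨0, by rintro r ⟨z, _, rfl⟩; exact norm_nonneg _⟩
  have hstep : ∀ y : X_h, sInf Sn ≤ (1 + β₂ / β₁) * ‖x - (y : X)‖ := by
    intro y
    obtain ⟨z, hzX, hzc, hzb⟩ := part1 y y.2
    exact (csInf_le hbdd ⟨z, ⟨hzX, hzc⟩, rfl⟩).trans hzb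
  have h2 : sInf Sn / (1 + β₂ / β₁) ≤ ⨅ y : X_h, ‖x - (y : X)‖ :=
    le_ciInf fun y => by rw [div_le_iff₀ hc]; exact (hstep y).trans_eq (mul_comm _ _)
  calc sInf Sn = sInf Sn / (1 + β₂ / β₁) * (1 + β₂ / β₁) := by field_simp
    _ ≤ (⨅ y : X_h, ‖x - (y : X)‖) * (1 + β₂ / β₁) := mul_le_mul_of_nonneg_right h2 hc.le
    _ = (1 + β₂ / β₁) * ⨅ y : X_h, ‖x - (y : X)‖ := mul_comm _ _
end
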